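/- Let G be a finite group, let p be the smallest prime divisor of |G|, and let A be a subgroup of maximum order among the self-centralizing subgroups of G. If |G : A| = p and |G : Z(G)| > p^2, then CD(G) = {A}. -/

import Mathlib

/-- The Chermak-Delgado measure of a subgroup `H` of `G`: `|H| · |C_G(H)|`. -/
noncomputable def cdMeasure (G : Type*) [Group G] (H : Subgroup G) : ℕ :=
  Nat.card H * Nat.card (Subgroup.centralizer (H : Set G))

/-- The Chermak-Delgado lattice of `G`: the set of subgroups whose
Chermak-Delgado measure is maximal. -/
def CD (G : Type*) [Group G] : Set (Subgroup G) :=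
  {H : Subgroup G | ∀ K : Subgroup G, cdMeasure G K ≤ cdMeasure G H}

open Subgroup

section Aux

variable {G : Type*} [Group G] [Finite G]

lemma aux_card_subgroupOf {H K : Subgroup G} (h : H ≤ K) :
    Nat.card (H.subgroupOf K) = Nat.card H :=
  Nat.card_congr (subgroupOfEquivOfLe h).toEquiv

lemma aux_relindex_card {H K : Subgroup G} (h : H ≤ K) :
    H.relIndex K * Nat.card H = Nat.card K := by
  have h2 := index_mul_card (H.subgroupOf K)
  rwa [aux_card_subgroupOf h] at h2

/-- The key Chermak–Delgado style inequality: `m(H) ≤ m(H ⊓ C(H))`. -/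
lemma aux_measure_le {H Z : Subgroup G} (hZeq : Z = H ⊓ Subgroup.centralizer (H : Set G)) :
    Nat.card H * Nat.card (Subgroup.centralizer (H : Set G)) ≤
      Nat.card Z * Nat.card (Subgroup.centralizer (Z : Set G)) := by
  have hZH : Z ≤ H := hZeq ▸ inf_le_left
  have hZcH : Z ≤ centralizer (H : Set G) := hZeq ▸ inf_le_right
  have hHcZ : H ≤ centralizer (Z : Set G) := le_centralizer_iff.mpr hZcH
  have hcHcZ : centralizer (H : Set G) ≤ centralizer (Z : Set G) :=
    centralizer_le (SetLike.coe_subset_coe.mpr hZH)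
  have e0 : (centralizer (H : Set G)).relIndex H = Z.relIndex H := by
    rw [hZeq, inf_comm H (centralizer (H : Set G)), inf_relIndex_right]
  have e1 : Z.relIndex H * Nat.card Z = Nat.card H := aux_relindex_card hZH
  have e2 : (centralizer (H : Set G)).relIndex (centralizer (Z : Set G)) *
      Nat.card (centralizer (H : Set G)) = Nat.card (centralizer (Z : Set G)) :=
    aux_relindex_card hcHcZ
  have hpos : 0 < Nat.card (Subgroup.centralizer (Z : Set G)) := Nat.card_pos
  have hne : (centralizer (H : Set G)).relIndex (centralizer (Z : Set G)) ≠ 0 := by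
    intro h; rw [h, zero_mul] at e2; omega
  have key : Z.relIndex H ≤
      (centralizer (H : Set G)).relIndex (centralizer (Z : Set G)) := by
    rw [← e0]; exact relIndex_le_of_le_right hHcZ hne
  calc Nat.card H * Nat.card (centralizer (H : Set G))
      = (Z.relIndex H * Nat.card Z) * Nat.card (centralizer (H : Set G)) := by rw [e1]
    _ ≤ ((centralizer (H : Set G)).relIndex (centralizer (Z : Set G)) * Nat.card Z) *
          Nat.card (centralizer (H : Set G)) :=
        Nat.mul_le_mul_right _ (Nat.mul_le_mul_right _ key)
    _ = Nat.card Z * ((centralizer (H : Set G)).relIndex (centralizer (Z : Set G)) *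
          Nat.card (centralizer (H : Set G))) := by ring
    _ = Nat.card Z * Nat.card (centralizer (Z : Set G)) := by rw [e2]

/-- Every abelian subgroup is contained in a self-centralizing subgroup. -/
lemma aux_exists_selfc (k : ℕ) : ∀ (D : Subgroup G), Nat.card G - Nat.card D ≤ k →
    D ≤ Subgroup.centralizer (D : Set G) →
    ∃ B : Subgroup G, D ≤ B ∧ Subgroup.centralizer (B : Set G) = B := by
  induction k with
  | zero =>
    intro D hk hD
    have h1 : Nat.card D ≤ Nat.card G := Nat.card_le_card_of_injective _ Subtype.coe_injective
    have h2 : D = ⊤ := Subgroup.eq_top_of_le_card D (by omega)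
    exact ⟨D, le_rfl, le_antisymm (by rw [h2]; exact le_top) hD⟩
  | succ k ih =>
    intro D hk hD
    by_cases hcd : Subgroup.centralizer (D : Set G) = D
    · exact ⟨D, le_rfl, hcd⟩
    · have hlt : D < centralizer (D : Set G) := lt_of_le_of_ne hD (fun h => hcd h.symm)
      obtain ⟨x, hxc, hxD⟩ := SetLike.exists_of_lt hlt
      have hcomm : ∀ a ∈ (↑D ∪ {x} : Set G), ∀ b ∈ (↑D ∪ {x} : Set G), a * b = b * a := by
        rintro a (ha | rfl) b (hb | rfl)
        · exact mem_centralizer_iff.mp (hD hb) a ha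
        · exact mem_centralizer_iff.mp hxc a ha
        · exact (mem_centralizer_iff.mp hxc b hb).symm
        · rfl
      have hD'eq : D ⊔ zpowers x = closure ((D : Set G) ∪ {x}) := by
        rw [Subgroup.closure_union, closure_eq, ← zpowers_eq_closure]
      letI : CommGroup (closure ((D : Set G) ∪ {x})) := closureCommGroupOfComm hcomm
      have hcommD' : IsMulCommutative (D ⊔ zpowers x : Subgroup G) := by
        rw [hD'eq]; exact ⟨⟨fun a b => mul_comm a b⟩⟩
      have hD'le : D ⊔ zpowers x ≤ centralizer ((D ⊔ zpowers x : Subgroup G) : Set G) :=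
        le_centralizer_iff_isMulCommutative.mpr hcommD'
      have hxmem : x ∈ D ⊔ zpowers x := mem_sup_right (mem_zpowers x)
      have hne2 : D ≠ D ⊔ zpowers x := by
        intro h; rw [← h] at hxmem; exact hxD hxmem
      have hDD' : D < D ⊔ zpowers x := lt_of_le_of_ne le_sup_left hne2
      have hcle : Nat.card D ≤ Nat.card (D ⊔ zpowers x : Subgroup G) :=
        Subgroup.card_le_of_le hDD'.le
      have hcne : Nat.card D ≠ Nat.card (D ⊔ zpowers x : Subgroup G) :=
        fun h => hne2 (Subgroup.eq_of_le_of_card_ge hDD'.le h.ge)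
      have hcG : Nat.card (D ⊔ zpowers x : Subgroup G) ≤ Nat.card G :=
        Nat.card_le_card_of_injective _ Subtype.coe_injective
      obtain ⟨B, hB1, hB2⟩ := ih (D ⊔ zpowers x) (by omega) hD'le
      exact ⟨B, le_trans le_sup_left hB1, hB2⟩

end Aux

theorem stmt_2 (G : Type*) [Group G] [Finite G] (p : ℕ) (hp : p.Prime)
    (hpdvd : p ∣ Nat.card G)
    (hpmin : ∀ q : ℕ, q.Prime → q ∣ Nat.card G → p ≤ q)
    (A : Subgroup G) (hA : Subgroup.centralizer (A : Set G) = A)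
    (hAmax : ∀ B : Subgroup G, Subgroup.centralizer (B : Set G) = B →
      Nat.card B ≤ Nat.card A)
    (hiA : A.index = p) (hZ : p ^ 2 < (Subgroup.center G).index) :
    CD G = {A} := by
  classical
  have hnpos : 0 < Nat.card G := Nat.card_pos
  have hapos : 0 < Nat.card A := Nat.card_pos
  have hna : p * Nat.card A = Nat.card G := by rw [← hiA]; exact index_mul_card A
  -- p is ≤ every nontrivial divisor of |G|
  have hple : ∀ m : ℕ, m ∣ Nat.card G → m ≠ 1 → p ≤ m := by
    intro m hm h1
    have hm0 : m ≠ 0 := by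
      rintro rfl
      exact absurd (zero_dvd_iff.mp hm) (by omega)
    have hq := Nat.minFac_prime h1
    exact le_trans (hpmin _ hq ((Nat.minFac_dvd m).trans hm))
      (Nat.minFac_le (Nat.pos_of_ne_zero hm0))
  -- strict bound for non-self-centralizing abelian subgroups
  have habel : ∀ D : Subgroup G, D ≤ Subgroup.centralizer (D : Set G) →
      Subgroup.centralizer (D : Set G) ≠ D →
      Nat.card D * Nat.card (Subgroup.centralizer (D : Set G)) <
        Nat.card A * Nat.card A := by
    intro D hD hne
    obtain ⟨B, hDB, hB⟩ := aux_exists_selfc (Nat.card G) D (Nat.sub_le _ _) hD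
    have hDneB : D ≠ B := by rintro rfl; exact hne hB
    have hBA : Nat.card B ≤ Nat.card A := hAmax B hB
    have hpD : p * Nat.card D ≤ Nat.card B := by
      have h1 : (D.subgroupOf B).index * Nat.card (D.subgroupOf B) = Nat.card B :=
        index_mul_card _
      have h2 : Nat.card (D.subgroupOf B) = Nat.card D := aux_card_subgroupOf hDB
      have h3 : (D.subgroupOf B).index ∣ Nat.card G :=
        dvd_trans (index_dvd_card (D.subgroupOf B)) (card_subgroup_dvd_card B)
      have h4 : (D.subgroupOf B).index ≠ 1 := by
        intro h
        exact hDneB (le_antisymm hDB (subgroupOf_eq_top.mp (index_eq_one.mp h)))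
      have h5 := hple _ h3 h4
      calc p * Nat.card D ≤ (D.subgroupOf B).index * Nat.card D :=
            Nat.mul_le_mul_right _ h5
        _ = Nat.card B := by rw [← h2]; exact h1
    by_cases hc : Subgroup.centralizer (D : Set G) = ⊤
    · -- D is central
      have hsub : (D : Set G) ⊆ (Subgroup.center G : Set G) :=
        centralizer_eq_top_iff_subset.mp hc
      have hDz : Nat.card D ≤ Nat.card (Subgroup.center G) :=
        Subgroup.card_le_of_le (fun g hg => hsub hg)
      have hzpos : 0 < Nat.card (Subgroup.center G) := Nat.card_pos
      have hzidx : Nat.card (Subgroup.center G) * (Subgroup.center G).index = Nat.card G := by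
        rw [mul_comm]; exact index_mul_card _
      have hz2 : Nat.card (Subgroup.center G) * p ^ 2 < Nat.card G := by
        calc Nat.card (Subgroup.center G) * p ^ 2
            < Nat.card (Subgroup.center G) * (Subgroup.center G).index :=
              mul_lt_mul_of_pos_left hZ hzpos
          _ = Nat.card G := hzidx
      have h5 : Nat.card D * p ^ 2 < Nat.card G :=
        lt_of_le_of_lt (mul_le_mul_left hDz (p ^ 2)) hz2
      have h6 : (Nat.card D * p ^ 2) * Nat.card G < Nat.card G * Nat.card G :=
        mul_lt_mul_of_pos_right h5 hnpos
      have h7 : Nat.card G * Nat.card G = p ^ 2 * (Nat.card A * Nat.card A) := by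
        rw [← hna]; ring
      have h8 : p ^ 2 * (Nat.card D * Nat.card G) <
          p ^ 2 * (Nat.card A * Nat.card A) := by
        calc p ^ 2 * (Nat.card D * Nat.card G)
            = (Nat.card D * p ^ 2) * Nat.card G := by ring
          _ < Nat.card G * Nat.card G := h6
          _ = p ^ 2 * (Nat.card A * Nat.card A) := h7
      have h9 : Nat.card D * Nat.card G < Nat.card A * Nat.card A :=
        Nat.lt_of_mul_lt_mul_left h8
      rw [hc, card_top]
      exact h9
    · -- centralizer of D is proper
      have h8 : p ≤ (Subgroup.centralizer (D : Set G)).index :=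
        hple _ (index_dvd_card _) (fun h => hc (index_eq_one.mp h))
      have h9 : p * Nat.card (Subgroup.centralizer (D : Set G)) ≤ Nat.card G := by
        calc p * Nat.card (Subgroup.centralizer (D : Set G))
            ≤ (Subgroup.centralizer (D : Set G)).index *
                Nat.card (Subgroup.centralizer (D : Set G)) :=
              Nat.mul_le_mul_right _ h8
          _ = Nat.card G := index_mul_card _
      have h10 : Nat.card (Subgroup.centralizer (D : Set G)) ≤ Nat.card A :=
        Nat.le_of_mul_le_mul_left (by rw [hna]; exact h9) hp.pos
      have h11 : p * (Nat.card D * Nat.card (Subgroup.centralizer (D : Set G))) ≤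
          Nat.card A * Nat.card A := by
        calc p * (Nat.card D * Nat.card (Subgroup.centralizer (D : Set G)))
            = (p * Nat.card D) * Nat.card (Subgroup.centralizer (D : Set G)) := by ring
          _ ≤ Nat.card B * Nat.card A := Nat.mul_le_mul hpD h10
          _ ≤ Nat.card A * Nat.card A := Nat.mul_le_mul_right _ hBA
      have hm1 : 0 < Nat.card D * Nat.card (Subgroup.centralizer (D : Set G)) :=
        Nat.mul_pos Nat.card_pos Nat.card_pos
      have h2p := hp.two_le
      calc Nat.card D * Nat.card (Subgroup.centralizer (D : Set G))
          < 2 * (Nat.card D * Nat.card (Subgroup.centralizer (D : Set G))) := by omega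
        _ ≤ p * (Nat.card D * Nat.card (Subgroup.centralizer (D : Set G))) :=
            Nat.mul_le_mul_right _ h2p
        _ ≤ Nat.card A * Nat.card A := h11
  -- full bound for abelian subgroups, with equality information
  have habel2 : ∀ D : Subgroup G, D ≤ Subgroup.centralizer (D : Set G) →
      Nat.card D * Nat.card (Subgroup.centralizer (D : Set G)) ≤
        Nat.card A * Nat.card A ∧
      (Nat.card D * Nat.card (Subgroup.centralizer (D : Set G)) =
        Nat.card A * Nat.card A →
        Subgroup.centralizer (D : Set G) = D ∧ Nat.card D = Nat.card A) := by
    intro D hD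
    by_cases hcd : Subgroup.centralizer (D : Set G) = D
    · have hDa := hAmax D hcd
      constructor
      · rw [hcd]; exact Nat.mul_le_mul hDa hDa
      · intro heq
        rw [hcd] at heq
        refine ⟨hcd, ?_⟩
        exact (mul_self_inj (Nat.zero_le _) (Nat.zero_le _)).mp heq
    · have hlt := habel D hD hcd
      exact ⟨hlt.le, fun heq => absurd heq hlt.ne⟩
  -- bound for all subgroups
  have hbound : ∀ H : Subgroup G, cdMeasure G H ≤ Nat.card A * Nat.card A := by
    intro H
    have hZ1 : (H ⊓ Subgroup.centralizer (H : Set G)) ≤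
        Subgroup.centralizer ((H ⊓ Subgroup.centralizer (H : Set G) : Subgroup G) : Set G) :=
      le_trans inf_le_right (centralizer_le (SetLike.coe_subset_coe.mpr inf_le_left))
    exact le_trans (aux_measure_le rfl) (habel2 _ hZ1).1
  have hcdA : cdMeasure G A = Nat.card A * Nat.card A := by
    unfold cdMeasure; rw [hA]
  ext H
  simp only [CD, Set.mem_setOf_eq, Set.mem_singleton_iff]
  constructor
  · intro hH
    have h1 : cdMeasure G H = Nat.card A * Nat.card A :=
      le_antisymm (hbound H) (hcdA ▸ hH A)
    have hZ1 : (H ⊓ Subgroup.centralizer (H : Set G)) ≤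
        Subgroup.centralizer ((H ⊓ Subgroup.centralizer (H : Set G) : Subgroup G) : Set G) :=
      le_trans inf_le_right (centralizer_le (SetLike.coe_subset_coe.mpr inf_le_left))
    have h2 : Nat.card (H ⊓ Subgroup.centralizer (H : Set G) : Subgroup G) *
        Nat.card (Subgroup.centralizer
          ((H ⊓ Subgroup.centralizer (H : Set G) : Subgroup G) : Set G)) =
        Nat.card A * Nat.card A :=
      le_antisymm (habel2 _ hZ1).1 (by rw [← h1]; exact aux_measure_le rfl)
    obtain ⟨hZc, hZa⟩ := (habel2 _ hZ1).2 h2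
    have hHZ : H ≤ Subgroup.centralizer
        ((H ⊓ Subgroup.centralizer (H : Set G) : Subgroup G) : Set G) :=
      le_centralizer_iff.mpr inf_le_right
    have hHeqZ : H = H ⊓ Subgroup.centralizer (H : Set G) :=
      le_antisymm (by rw [← hZc]; exact hHZ) inf_le_left
    have hHc : Subgroup.centralizer (H : Set G) = H := by
      conv_lhs => rw [hHeqZ]
      rw [hZc, ← hHeqZ]
    have hHa : Nat.card H = Nat.card A := by rw [hHeqZ]; exact hZa
    -- now show H = A
    by_contra hne'
    have hHidx : H.index = p := by
      have h3 : H.index * Nat.card H = Nat.card G := index_mul_card H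
      rw [hHa, ← hna] at h3
      exact Nat.eq_of_mul_eq_mul_right hapos h3
    have hsup : A ⊔ H = ⊤ := by
      have hdvd : (A ⊔ H).index ∣ p := hiA ▸ index_dvd_of_le le_sup_left
      rcases (Nat.Prime.eq_one_or_self_of_dvd hp _ hdvd) with h1' | h1'
      · exact index_eq_one.mp h1'
      · exfalso
        have h3 : (A ⊔ H).index * Nat.card (A ⊔ H : Subgroup G) = Nat.card G :=
          index_mul_card _
        rw [h1', ← hna] at h3
        have h4 : Nat.card (A ⊔ H : Subgroup G) = Nat.card A :=
          Nat.eq_of_mul_eq_mul_left hp.pos h3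
        have h5 : A = A ⊔ H := Subgroup.eq_of_le_of_card_ge le_sup_left h4.le
        have h6 : H ≤ A := by rw [h5]; exact le_sup_right
        exact hne' (Subgroup.eq_of_le_of_card_ge h6 hHa.ge)
    have hinf : A ⊓ H ≤ Subgroup.center G := by
      have hAc : A ≤ Subgroup.centralizer ((A ⊓ H : Subgroup G) : Set G) := by
        have h0 : Subgroup.centralizer (A : Set G) ≤
            Subgroup.centralizer ((A ⊓ H : Subgroup G) : Set G) :=
          centralizer_le (SetLike.coe_subset_coe.mpr inf_le_left)
        rwa [hA] at h0
      have hHc' : H ≤ Subgroup.centralizer ((A ⊓ H : Subgroup G) : Set G) := by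
        have h0 : Subgroup.centralizer (H : Set G) ≤
            Subgroup.centralizer ((A ⊓ H : Subgroup G) : Set G) :=
          centralizer_le (SetLike.coe_subset_coe.mpr inf_le_right)
        rwa [hHc] at h0
      have h1' : A ⊓ H ≤ Subgroup.centralizer ((A ⊔ H : Subgroup G) : Set G) :=
        le_centralizer_iff.mpr (sup_le hAc hHc')
      rw [hsup] at h1'
      rwa [coe_top, centralizer_univ] at h1'
    have hZidx : (Subgroup.center G).index ≤ p ^ 2 := by
      have h1' : (Subgroup.center G).index ∣ (A ⊓ H).index := index_dvd_of_le hinf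
      have h2' : (A ⊓ H).index ≤ p * p := by
        have h3' := index_inf_le (H := A) (K := H)
        rwa [hiA, hHidx] at h3'
      have h3' : (A ⊓ H).index ≠ 0 := index_ne_zero_of_finite
      calc (Subgroup.center G).index ≤ (A ⊓ H).index :=
            Nat.le_of_dvd (Nat.pos_of_ne_zero h3') h1'
        _ ≤ p * p := h2'
        _ = p ^ 2 := (sq p).symm
    exact absurd hZ (not_lt.mpr hZidx)
  · intro hHA K
    rw [hHA, hcdA]
    exact hbound K
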